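/- There exist topological spaces X, Y (both the discrete space on ℕ) with indexed bases U = {U_i}_{i∈ℕ} and V = {V_j}_{j∈ℕ} such that the identity function id_ℕ is (U,V)-computable but no recursively enumerable (U,V)-approximation system for id_ℕ exists. -/

import Mathlib

/-- A set in a primcodable type is recursively enumerable. -/
def IsRE {α : Type} [Primcodable α] (S : Set α) : Prop :=
  Partrec fun a => Part.assert (a ∈ S) fun _ => Part.some ()

/-- `F` is an enumeration operator. -/
def IsEnumOp (F : Set ℕ → Set ℕ) : Prop :=
  ∃ W : Set (List ℕ × ℕ), IsRE W ∧
    ∀ M : Set ℕ, F M = {j | ∃ l : List ℕ, (∀ i ∈ l, i ∈ M) ∧ (l, j) ∈ W}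

open Classical

/-- The `n`-th r.e. set of pairs. -/
noncomputable def ECode (n : ℕ) : Set (ℕ × ℕ) :=
  {p | ((Denumerable.ofNat Nat.Partrec.Code n).eval (Encodable.encode p)).Dom}

lemma exists_ECode {R : Set (ℕ × ℕ)} (h : IsRE R) : ∃ n, R = ECode n := by
  have h' : Nat.Partrec fun n => Part.bind (Encodable.decode (α := ℕ × ℕ) n)
      fun a => ((Part.assert (a ∈ R) fun _ => Part.some ()).map Encodable.encode) := h
  obtain ⟨c, hc⟩ := Nat.Partrec.Code.exists_code.1 h'
  refine ⟨Encodable.encode c, ?_⟩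
  ext p
  simp only [ECode, Set.mem_setOf_eq, Denumerable.ofNat_encode, hc, Encodable.encodek]
  simp [Part.assert]

/-- A number bigger than everything in `s`. -/
noncomputable def fresh (s : Finset ℕ) : ℕ := s.sup id + 1

lemma lt_fresh_of_mem {s : Finset ℕ} {z : ℕ} (h : z ∈ s) : z < fresh s := by
  have := Finset.le_sup (f := id) h
  simp only [id] at this
  simp only [fresh]
  omega

/-- Column `2c` of the `c`-th r.e. set. -/
noncomputable def Col (c : ℕ) : Set ℕ := {i | (i, 2 * c) ∈ ECode c}

/-- Can we pick a pair for column `2c` avoiding `Col c`? -/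
def good (s : Finset ℕ) (c : ℕ) : Prop :=
  ∃ a, a ∉ s ∧ a + (2 * c + 1) ∉ s ∧ a ∉ Col c ∧ a + (2 * c + 1) ∉ Col c

/-- Choice of the two pair-bases at step `c` given covered set `s`. -/
noncomputable def step (s : Finset ℕ) (c : ℕ) : ℕ × ℕ :=
  if h : good s c then
    (choose h, fresh (insert (choose h) (insert (choose h + (2 * c + 1)) s)))
  else
    (fresh s,
      if fresh (insert (fresh s) (insert (fresh s + (2 * c + 1)) s)) ∈ Col c then
        fresh (insert (fresh s) (insert (fresh s + (2 * c + 1)) s))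
      else
        fresh (insert (fresh s) (insert (fresh s + (2 * c + 1)) s)) + (2 * c + 1))

/-- Covered set before step `c`. -/
noncomputable def state : ℕ → Finset ℕ
  | 0 => ∅
  | c + 1 =>
    insert (step (state c) c).1 (insert ((step (state c) c).1 + (2 * c + 1))
      (insert (step (state c) c).2 (insert ((step (state c) c).2 + (2 * c + 2)) (state c))))

lemma step_spec (s : Finset ℕ) (c : ℕ) :
    (step s c).1 ∉ s ∧ (step s c).1 + (2 * c + 1) ∉ s ∧
    (∀ w ∈ s, w < (step s c).2) ∧ (step s c).1 < (step s c).2 ∧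
    (step s c).1 + (2 * c + 1) < (step s c).2 ∧
    (good s c → (step s c).1 ∉ Col c ∧ (step s c).1 + (2 * c + 1) ∉ Col c) ∧
    (¬ good s c → (step s c).2 ∈ Col c) := by
  unfold step
  split
  · next h =>
    obtain ⟨h1, h2, h3, h4⟩ := choose_spec h
    set a := choose h
    set s' := insert a (insert (a + (2 * c + 1)) s) with hs'
    have ha : a < fresh s' := lt_fresh_of_mem (by simp [hs'])
    have hb : a + (2 * c + 1) < fresh s' := lt_fresh_of_mem (by simp [hs'])
    refine ⟨h1, h2, ?_, ha, hb, fun _ => ⟨h3, h4⟩, fun hg => absurd h hg⟩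
    intro w hw
    exact lt_fresh_of_mem (by simp [hs', hw])
  · next h =>
    set a := fresh s with hadef
    set s' := insert a (insert (a + (2 * c + 1)) s) with hs'
    have ha1 : a ∉ s := fun hm => by have := lt_fresh_of_mem hm; omega
    have ha2 : a + (2 * c + 1) ∉ s := fun hm => by have := lt_fresh_of_mem hm; omega
    have ha : a < fresh s' := lt_fresh_of_mem (by simp [hs'])
    have hb : a + (2 * c + 1) < fresh s' := lt_fresh_of_mem (by simp [hs'])
    have hw : ∀ w ∈ s, w < fresh s' := fun w hw => lt_fresh_of_mem (by simp [hs', hw])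
    have hf1 : fresh s' ∉ s := fun hm => by have := hw _ hm; omega
    have hf2 : fresh s' + (2 * c + 1) ∉ s := fun hm => by have := hw _ hm; omega
    have hcol : fresh s' ∈ Col c ∨ fresh s' + (2 * c + 1) ∈ Col c := by
      by_contra hc
      push_neg at hc
      exact h ⟨fresh s', hf1, hf2, hc.1, hc.2⟩
    split
    · next hyes =>
      exact ⟨ha1, ha2, fun w hm => by have := hw w hm; omega, by omega, by omega,
        fun hg => absurd hg h, fun _ => hyes⟩
    · next hno =>
      refine ⟨ha1, ha2, fun w hm => by have := hw w hm; omega, by omega, by omega,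
        fun hg => absurd hg h, fun _ => ?_⟩
      rcases hcol with h' | h'
      · exact absurd h' hno
      · exact h'

/-- The smaller element of the pair for column `x`. -/
noncomputable def A (x : ℕ) : ℕ :=
  if x % 2 = 0 then (step (state (x / 2)) (x / 2)).1 else (step (state (x / 2)) (x / 2)).2

/-- The pair for column `x`. -/
def P (x : ℕ) : Set ℕ := {A x, A x + x + 1}

lemma A_even (c : ℕ) : A (2 * c) = (step (state c) c).1 := by
  have h1 : 2 * c % 2 = 0 := by omega
  have h2 : 2 * c / 2 = c := by omega
  simp [A, h1, h2]

lemma A_odd (c : ℕ) : A (2 * c + 1) = (step (state c) c).2 := by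
  have h1 : (2 * c + 1) % 2 ≠ 0 := by omega
  have h2 : (2 * c + 1) / 2 = c := by omega
  simp [A, h1, h2]

lemma parity (x : ℕ) : ∃ c, x = 2 * c ∨ x = 2 * c + 1 := ⟨x / 2, by omega⟩

lemma P_subset_state (x : ℕ) : ∀ z ∈ P x, z ∈ state (x / 2 + 1) := by
  intro z hz
  obtain ⟨c, rfl | rfl⟩ := parity x
  · have h2 : 2 * c / 2 = c := by omega
    rw [h2]
    simp only [P, A_even, Set.mem_insert_iff, Set.mem_singleton_iff] at hz
    simp only [state, Finset.mem_insert]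
    omega
  · have h2 : (2 * c + 1) / 2 = c := by omega
    rw [h2]
    simp only [P, A_odd, Set.mem_insert_iff, Set.mem_singleton_iff] at hz
    simp only [state, Finset.mem_insert]
    omega

lemma P_not_state (x : ℕ) : ∀ z ∈ P x, z ∉ state (x / 2) := by
  intro z hz
  obtain ⟨c, rfl | rfl⟩ := parity x
  · have h2 : 2 * c / 2 = c := by omega
    rw [h2]
    obtain ⟨s1, s2, _, _, _, _, _⟩ := step_spec (state c) c
    simp only [P, A_even, Set.mem_insert_iff, Set.mem_singleton_iff] at hz
    intro hmem
    rcases hz with rfl | rfl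
    · exact s1 hmem
    · exact s2 (by have : (step (state c) c).1 + 2 * c + 1 = (step (state c) c).1 + (2 * c + 1) := by omega
                   rwa [this] at hmem)
  · have h2 : (2 * c + 1) / 2 = c := by omega
    rw [h2]
    obtain ⟨_, _, s3, _, _, _, _⟩ := step_spec (state c) c
    simp only [P, A_odd, Set.mem_insert_iff, Set.mem_singleton_iff] at hz
    intro hmem
    have := s3 z hmem
    omega

lemma state_mono : ∀ {c d : ℕ}, c ≤ d → state c ⊆ state d := by
  intro c d h
  induction d with
  | zero =>
    obtain rfl : c = 0 := by omega
    exact fun z hz => hz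
  | succ d ih =>
    rcases Nat.lt_or_ge c (d + 1) with h' | h'
    · intro z hz
      have := ih (by omega) hz
      simp only [state, Finset.mem_insert]
      tauto
    · obtain rfl : c = d + 1 := by omega
      exact fun z hz => hz

lemma P_disjoint_aux {x y : ℕ} (hxy : x < y) {z : ℕ} (hx : z ∈ P x) (hy : z ∈ P y) :
    False := by
  rcases Nat.lt_or_ge (x / 2) (y / 2) with h | h
  · have h1 : z ∈ state (y / 2) := state_mono (by omega) (P_subset_state x z hx)
    exact P_not_state y z hy h1
  · have hc : x / 2 = y / 2 := by omega
    obtain ⟨c, hx2, hy2⟩ : ∃ c, x = 2 * c ∧ y = 2 * c + 1 := ⟨x / 2, by omega⟩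
    subst hx2; subst hy2
    obtain ⟨_, _, s3, s4, s5, _, _⟩ := step_spec (state c) c
    simp only [P, A_even, A_odd, Set.mem_insert_iff, Set.mem_singleton_iff] at hx hy
    omega

lemma P_disjoint {x y : ℕ} (hxy : x ≠ y) {z : ℕ} (hx : z ∈ P x) (hy : z ∈ P y) :
    False := by
  rcases Nat.lt_or_ge x y with h | h
  · exact P_disjoint_aux h hx hy
  · exact P_disjoint_aux (by omega) hy hx

lemma K1 (c : ℕ) (h : good (state c) c) : ∀ z ∈ P (2 * c), z ∉ Col c := by
  intro z hz
  obtain ⟨_, _, _, _, _, s6, _⟩ := step_spec (state c) c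
  obtain ⟨g1, g2⟩ := s6 h
  simp only [P, A_even, Set.mem_insert_iff, Set.mem_singleton_iff] at hz
  rcases hz with rfl | rfl
  · exact g1
  · have : (step (state c) c).1 + 2 * c + 1 = (step (state c) c).1 + (2 * c + 1) := by omega
    rw [this]
    exact g2

lemma K2 (c : ℕ) (h : ¬ good (state c) c) : A (2 * c + 1) ∈ Col c := by
  obtain ⟨_, _, _, _, _, _, s7⟩ := step_spec (state c) c
  rw [A_odd]
  exact s7 h

/-- The `W` set for the enumeration operator. -/
def Wset : Set (List ℕ × ℕ) := {p | p.1 = [p.1.headI, p.1.headI + p.2 + 1]}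

lemma Wset_RE : IsRE Wset := by
  have hf : Computable fun p : List ℕ × ℕ =>
      decide (p.1 = [p.1.headI, p.1.headI + p.2 + 1]) := by
    have h1 : Primrec fun p : List ℕ × ℕ => p.1 := Primrec.fst
    have hh : Primrec fun p : List ℕ × ℕ => p.1.headI := Primrec.list_headI.comp Primrec.fst
    have hh2 : Primrec fun p : List ℕ × ℕ => p.1.headI + p.2 + 1 :=
      Primrec.succ.comp (Primrec.nat_add.comp hh Primrec.snd)
    have h2 : Primrec fun p : List ℕ × ℕ => [p.1.headI, p.1.headI + p.2 + 1] :=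
      Primrec.list_cons.comp hh (Primrec.list_cons.comp hh2 (Primrec.const []))
    exact (PrimrecPred.decide (Primrec.eq.comp h1 h2)).to_comp
  have : ComputablePred (· ∈ Wset) := by
    rw [ComputablePred.computable_iff]
    exact ⟨_, hf, by funext p; simp [Wset]⟩
  exact this.to_re

theorem stmt7 : ∃ U V : ℕ → Set ℕ,
    TopologicalSpace.IsTopologicalBasis (Set.range U) ∧
    TopologicalSpace.IsTopologicalBasis (Set.range V) ∧
    (∃ F : Set ℕ → Set ℕ, IsEnumOp F ∧
        ∀ x : ℕ, {j | id x ∈ V j} = F {i | x ∈ U i}) ∧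
    ¬ ∃ R : Set (ℕ × ℕ), IsRE R ∧
        ∀ x j : ℕ, id x ∈ V j ↔ ∃ i, (i, j) ∈ R ∧ x ∈ U i := by
  refine ⟨fun i => {x | i ∈ P x}, fun j => {j}, ?_, ?_, ?_, ?_⟩
  · -- basis for U
    refine TopologicalSpace.isTopologicalBasis_of_isOpen_of_nhds
      (fun u _ => isOpen_discrete u) (fun a u ha hu => ?_)
    refine ⟨{x | A a ∈ P x}, ⟨A a, rfl⟩, ?_, ?_⟩
    · exact Or.inl rfl
    · intro y hy
      have hya : y = a := by
        by_contra hne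
        exact P_disjoint hne hy (Or.inl rfl)
      rwa [hya]
  · -- basis for V
    refine TopologicalSpace.isTopologicalBasis_of_isOpen_of_nhds
      (fun u _ => isOpen_discrete u) (fun a u ha hu => ?_)
    exact ⟨{a}, ⟨a, rfl⟩, rfl, by intro y hy; rwa [hy]⟩
  · -- computability of id
    refine ⟨fun M => {j | ∃ l : List ℕ, (∀ i ∈ l, i ∈ M) ∧ (l, j) ∈ Wset},
      ⟨Wset, Wset_RE, fun M => rfl⟩, fun x => ?_⟩
    ext j
    simp only [Set.mem_setOf_eq, id_eq, Set.mem_singleton_iff]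
    constructor
    · rintro rfl
      refine ⟨[A x, A x + x + 1], ?_, ?_⟩
      · intro i hi
        simp only [List.mem_cons, List.not_mem_nil, or_false] at hi
        rcases hi with rfl | rfl
        · exact Or.inl rfl
        · exact Or.inr rfl
      · simp [Wset]
    · rintro ⟨l, hl, hW⟩
      simp only [Wset, Set.mem_setOf_eq] at hW
      have hmem1 : x ∈ {y | l.headI ∈ P y} := hl l.headI (by rw [hW]; simp)
      have hmem2 : x ∈ {y | l.headI + j + 1 ∈ P y} := hl (l.headI + j + 1) (by rw [hW]; simp)
      simp only [Set.mem_setOf_eq, P, Set.mem_insert_iff, Set.mem_singleton_iff]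
        at hmem1 hmem2
      omega
  · -- no r.e. approximation system
    rintro ⟨R, hRE, hcond⟩
    obtain ⟨c, rfl⟩ := exists_ECode hRE
    by_cases hg : good (state c) c
    · obtain ⟨i, hiR, hiP⟩ := (hcond (2 * c) (2 * c)).mp rfl
      exact K1 c hg i hiP hiR
    · have h1 : A (2 * c + 1) ∈ Col c := K2 c hg
      have h2 : (2 * c + 1 : ℕ) ∈ ({(2 * c : ℕ)} : Set ℕ) :=
        (hcond (2 * c + 1) (2 * c)).mpr ⟨A (2 * c + 1), h1, Or.inl rfl⟩
      simp only [Set.mem_singleton_iff] at h2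
      omega
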